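/- In the same satisfiability reduction game: if F is unsatisfiable, then no Nash stable partition exists. Specifically, any Nash stable partition must be individually rational, in an individually rational partition at most one of {p, ¬p} can be in the coalition of player 1, and if for some clause X = (ℓ₁∨...∨ℓ_t) none of ℓ₁,...,ℓ_t is in π(1), then X strictly prefers joining π(1), and subsequently player 1 strictly prefers leaving, contradicting Nash stability. -/

import Mathlib

open Finset

/-- A partition of the player set into coalitions: `part i` is the coalition
containing player `i`. -/
structure HPartition (N : Type*) where
  part : N → Finset N
  mem_self : ∀ i, i ∈ part i
  eq_of_mem : ∀ i j : N, j ∈ part i → part j = part i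

section Defs

variable {N : Type*} [DecidableEq N]

/-- Strict part of a weak preference over coalitions. -/
def SPref (pref : N → Finset N → Finset N → Prop) (i : N) (S T : Finset N) : Prop :=
  pref i S T ∧ ¬ pref i T S

/-- `S` is an (existing or empty) coalition of the partition `π`. -/
def IsCoalitionOf (π : HPartition N) (S : Finset N) : Prop :=
  S = ∅ ∨ ∃ j, S = π.part j

/-- Nash stability: no player strictly prefers joining another existing
(possibly empty) coalition. -/
def NashStable (pref : N → Finset N → Finset N → Prop) (π : HPartition N) : Prop :=
  ∀ i S, IsCoalitionOf π S → S ≠ π.part i →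
    ¬ SPref pref i (insert i S) (π.part i)

/-- Individual stability: no strictly improving move that all members of the
joined coalition weakly approve. -/
def IndStable (pref : N → Finset N → Finset N → Prop) (π : HPartition N) : Prop :=
  ∀ i S, IsCoalitionOf π S → S ≠ π.part i →
    ¬ (SPref pref i (insert i S) (π.part i) ∧ ∀ j ∈ S, pref j (insert i S) S)

/-- Contractual individual stability: no strictly improving move approved by the
joined coalition and by the abandoned coalition. -/
def ContIndStable (pref : N → Finset N → Finset N → Prop) (π : HPartition N) : Prop :=
  ∀ i S, IsCoalitionOf π S → S ≠ π.part i →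
    ¬ (SPref pref i (insert i S) (π.part i) ∧ (∀ j ∈ S, pref j (insert i S) S) ∧
        (∀ j ∈ π.part i, j ≠ i → pref j ((π.part i).erase i) (π.part i)))

/-- Individual rationality: everyone weakly prefers his coalition to being alone. -/
def IndRational (pref : N → Finset N → Finset N → Prop) (π : HPartition N) : Prop :=
  ∀ i, pref i (π.part i) {i}

/-- A CIS deviation from `π` to `π'`: player `i` moves to the (possibly empty)
existing coalition `T`, strictly improving, while no member of `T` nor of the
abandoned coalition is worse off. -/
def CISDeviation (pref : N → Finset N → Finset N → Prop) (π π' : HPartition N) : Prop :=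
  ∃ i T, IsCoalitionOf π T ∧ T ≠ π.part i ∧ i ∉ T ∧
    SPref pref i (insert i T) (π.part i) ∧
    (∀ j ∈ T, pref j (insert i T) T) ∧
    (∀ j ∈ π.part i, j ≠ i → pref j ((π.part i).erase i) (π.part i)) ∧
    (∀ k, π'.part k = if k = i ∨ k ∈ T then insert i T else (π.part k).erase i)

/-- The weak relation associated with a (primitive) strict relation. -/
def weakOf (sp : N → Finset N → Finset N → Prop) (i : N) (S T : Finset N) : Prop :=
  ¬ sp i T S

/-- Strict part of a weak preference over players. -/
def strictP (p : N → N → N → Prop) (i j k : N) : Prop := p i j k ∧ ¬ p i k j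

/-- Player `j` is unacceptable to `i`: `i ≻ᵢ j`. -/
def unacc (p : N → N → N → Prop) (i j : N) : Prop := strictP p i i j

/-- Player `i` likes `j`: `j ≻ᵢ i`. -/
def likes (p : N → N → N → Prop) (i j : N) : Prop := strictP p i j i

/-- Each player's preference over players is a complete preorder. -/
def CompletePreorder (p : N → N → N → Prop) : Prop :=
  (∀ i j k, p i j k ∨ p i k j) ∧ (∀ i a b c, p i a b → p i b c → p i a c)

/-- The set of `≿ᵢ`-maximal elements of `J`, with `max ∅ = {i}`. -/
def maxSet (p : N → N → N → Prop) (i : N) (J : Finset N) : Set N :=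
  if J = ∅ then {i} else {m | m ∈ J ∧ ∀ j ∈ J, p i m j}

/-- The set of `≿ᵢ`-minimal elements of `J`, with `min ∅ = {i}`. -/
def minSet (p : N → N → N → Prop) (i : N) (J : Finset N) : Set N :=
  if J = ∅ then {i} else {m | m ∈ J ∧ ∀ j ∈ J, p i j m}

/-- W-hedonic (weak) preference over coalitions: compare worst members. -/
def WPref (p : N → N → N → Prop) (i : N) (S T : Finset N) : Prop :=
  ∀ s ∈ minSet p i (S.erase i), ∀ t ∈ minSet p i (T.erase i), p i s t

/-- WW-hedonic (weak) preference over coalitions. -/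
def WWPref (p : N → N → N → Prop) (i : N) (S T : Finset N) : Prop :=
  (∃ j ∈ T.erase i, unacc p i j) ∨ WPref p i S T

/-- BB-hedonic (weak) preference over coalitions. -/
def BBPref (p : N → N → N → Prop) (i : N) (S T : Finset N) : Prop :=
  (∃ j ∈ T.erase i, unacc p i j) ∨
    ((∀ j ∈ S.erase i, ¬ unacc p i j) ∧ (∀ j ∈ T.erase i, ¬ unacc p i j) ∧
      ∀ s ∈ maxSet p i (S.erase i), ∀ t ∈ maxSet p i (T.erase i), p i s t)

/-- B-hedonic strict preference over coalitions: better best member, or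
indifferent best members and smaller size. -/
def BStrict (p : N → N → N → Prop) (i : N) (S T : Finset N) : Prop :=
  (∀ s ∈ maxSet p i (S.erase i), ∀ t ∈ maxSet p i (T.erase i), strictP p i s t) ∨
    ((∀ s ∈ maxSet p i (S.erase i), ∀ t ∈ maxSet p i (T.erase i), p i s t ∧ p i t s) ∧
      S.card < T.card)

/-- B-hedonic weak preference over coalitions. -/
def BWeak (p : N → N → N → Prop) : N → Finset N → Finset N → Prop :=
  weakOf (BStrict p)

end Defs

/-- Players of the SAT reduction game: one player per clause, one player per
literal (a variable together with a sign), and the special players 0 and 1. -/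
inductive SatPlayer (k m : ℕ) where
  | clause : Fin k → SatPlayer k m
  | lit : Fin m → Bool → SatPlayer k m
  | zero : SatPlayer k m
  | one : SatPlayer k m
deriving DecidableEq, Fintype

/-- Utility encoding of the preferences of the reduction game, for a CNF
formula `F` (clause `X` is the set of literals `F X`).  The diagonal value is
each player's acceptability threshold. -/
def satU {k m : ℕ} (F : Fin k → Finset (Fin m × Bool)) :
    SatPlayer k m → SatPlayer k m → ℤ
  | .lit q b, y =>
      match y with
      | .zero => 3
      | .one => 3
      | .lit q' b' => if q' = q then (if b' = b then 1 else 0) else 2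
      | .clause _ => 0
  | .clause X, y =>
      match y with
      | .one => 4
      | .lit q b => if (q, b) ∈ F X then 1 else 3
      | .clause _ => 2
      | .zero => 1
  | .zero, y =>
      match y with
      | .one => 1
      | .clause _ => 1
      | _ => 2
  | .one, y =>
      match y with
      | .zero => 1
      | .clause _ => 1
      | _ => 2

/-- The induced (weak) preference of each player over players. -/
def satP {k m : ℕ} (F : Fin k → Finset (Fin m × Bool)) :
    SatPlayer k m → SatPlayer k m → SatPlayer k m → Prop :=
  fun i j l => satU F i l ≤ satU F i j

open Classical in
/-- The coalition of player 1 together with the literals true under `v`. -/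
noncomputable def Tcoal (k m : ℕ) (v : Fin m → Bool) : Finset (SatPlayer k m) :=
  Finset.univ.filter fun x => x = .one ∨ ∃ q b, x = .lit q b ∧ v q = b

open Classical in
/-- The coalition of player 0 together with the literals false under `v`. -/
noncomputable def Fcoal (k m : ℕ) (v : Fin m → Bool) : Finset (SatPlayer k m) :=
  Finset.univ.filter fun x => x = .zero ∨ ∃ q b, x = .lit q b ∧ v q ≠ b

open Classical in
/-- The coalition of all clause players. -/
noncomputable def Ccoal (k m : ℕ) : Finset (SatPlayer k m) :=
  Finset.univ.filter fun x => ∃ X, x = .clause X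

/-- if the CNF formula `F` is unsatisfiable, then the constructed
BB-hedonic game has no Nash stable partition. -/
theorem sat_reduction_unsat {k m : ℕ} (F : Fin k → Finset (Fin m × Bool))
    (hunsat : ∀ v : Fin m → Bool, ∃ X : Fin k, ∀ ℓ ∈ F X, v ℓ.1 ≠ ℓ.2) :
    ∀ π : HPartition (SatPlayer k m), ¬ NashStable (BBPref (satP F)) π := by

  intro π hNash
  classical
  have hueq : ∀ i j : SatPlayer k m, unacc (satP F) i j ↔ satU F i j < satU F i i := by
    intro i j
    exact ⟨fun h => lt_of_le_not_ge h.1 h.2, fun h => ⟨le_of_lt h, not_le_of_gt h⟩⟩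
  -- Nash stability implies every coalition is "clean" (individually rational)
  have clean : ∀ i j : SatPlayer k m, j ∈ (π.part i).erase i → ¬ unacc (satP F) i j := by
    intro i j hj hu
    have hne : (∅ : Finset (SatPlayer k m)) ≠ π.part i := by
      intro h
      have := π.mem_self i
      rw [← h] at this
      simp at this
    refine hNash i ∅ (Or.inl rfl) hne ?_
    constructor
    · exact Or.inl ⟨j, hj, hu⟩
    · rintro (⟨j', hj', _⟩ | ⟨hcl, -, -⟩)
      · simp at hj'
      · exact hcl j hj hu
  set v : Fin m → Bool := fun q => decide (SatPlayer.lit q true ∈ π.part SatPlayer.one)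
    with hv
  obtain ⟨X, hX⟩ := hunsat v
  have hclause_not1 : ∀ Y : Fin k, SatPlayer.clause Y ∉ π.part SatPlayer.one := by
    intro Y hY
    refine clean _ _ (Finset.mem_erase.mpr ⟨by simp, hY⟩) ?_
    rw [hueq]; norm_num [satU]
  have hzero_not1 : (SatPlayer.zero : SatPlayer k m) ∉ π.part SatPlayer.one := by
    intro hY
    refine clean _ _ (Finset.mem_erase.mpr ⟨by simp, hY⟩) ?_
    rw [hueq]; norm_num [satU]
  have hlit_not1 : ∀ q b, (q, b) ∈ F X → SatPlayer.lit q b ∉ π.part SatPlayer.one := by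
    intro q b hmem hin
    have hvq := hX (q, b) hmem
    cases b with
    | true =>
      apply hvq
      simp only [hv]
      simp [hin]
    | false =>
      have htrue : SatPlayer.lit q true ∈ π.part SatPlayer.one := by
        by_contra h
        exact hvq (by simp only [hv]; simp [h])
      have heq := π.eq_of_mem SatPlayer.one (SatPlayer.lit q false) hin
      refine clean (SatPlayer.lit q false) (SatPlayer.lit q true) ?_ ?_
      · exact Finset.mem_erase.mpr ⟨by simp, by rw [heq]; exact htrue⟩
      · rw [hueq]; norm_num [satU]
  have hXne : π.part SatPlayer.one ≠ π.part (SatPlayer.clause X) := by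
    intro h
    exact hclause_not1 X (by rw [h]; exact π.mem_self _)
  have h1mem : (SatPlayer.one : SatPlayer k m) ∈ π.part SatPlayer.one := π.mem_self _
  have hJne : π.part (SatPlayer.one : SatPlayer k m) ≠ ∅ := by
    intro h; rw [h] at h1mem; simp at h1mem
  -- values of the clause player X on members of π(1)
  have hS1good : ∀ y ∈ π.part (SatPlayer.one : SatPlayer k m),
      2 ≤ satU F (SatPlayer.clause X) y ∧ satU F (SatPlayer.clause X) y ≤ 4 := by
    intro y hy
    cases y with
    | clause Y => exact absurd hy (hclause_not1 Y)
    | zero => exact absurd hy hzero_not1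
    | one => norm_num [satU]
    | lit q b =>
      have : (q, b) ∉ F X := fun hmem => hlit_not1 q b hmem hy
      simp [satU, this]
  -- values of the clause player X on other members of its own coalition
  have hTle3 : ∀ t ∈ (π.part (SatPlayer.clause X)).erase (SatPlayer.clause X),
      satU F (SatPlayer.clause X) t ≤ 3 := by
    intro t ht
    have hcl := clean (SatPlayer.clause X) t ht
    rw [hueq] at hcl
    push_neg at hcl
    cases t with
    | clause Y => norm_num [satU]
    | zero => norm_num [satU] at hcl
    | one =>
      exact absurd (π.eq_of_mem _ _ (Finset.mem_of_mem_erase ht)) hXne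
    | lit q b =>
      by_cases hmem : (q, b) ∈ F X
      · simp [satU, hmem] at hcl
      · simp [satU, hmem]
  have hXnot1 : (SatPlayer.clause X : SatPlayer k m) ∉ π.part SatPlayer.one :=
    hclause_not1 X
  have herase : (insert (SatPlayer.clause X) (π.part SatPlayer.one)).erase
      (SatPlayer.clause X) = π.part SatPlayer.one := Finset.erase_insert hXnot1
  -- max sets
  have hmaxS : ∀ s ∈ maxSet (satP F) (SatPlayer.clause X) (π.part SatPlayer.one),
      4 ≤ satU F (SatPlayer.clause X) s := by
    intro s hs
    rw [maxSet, if_neg hJne] at hs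
    have := hs.2 SatPlayer.one h1mem
    simpa [satP, satU] using this
  have hmaxSex : ∃ s ∈ maxSet (satP F) (SatPlayer.clause X) (π.part SatPlayer.one),
      4 ≤ satU F (SatPlayer.clause X) s := by
    obtain ⟨b, hb, hball⟩ := Finset.exists_max_image (π.part SatPlayer.one)
      (satU F (SatPlayer.clause X)) ⟨_, h1mem⟩
    refine ⟨b, ?_, ?_⟩
    · rw [maxSet, if_neg hJne]
      exact ⟨hb, fun j hj => hball j hj⟩
    · simpa [satU] using hball SatPlayer.one h1mem
  have hmaxT : ∀ t ∈ maxSet (satP F) (SatPlayer.clause X)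
      ((π.part (SatPlayer.clause X)).erase (SatPlayer.clause X)),
      satU F (SatPlayer.clause X) t ≤ 3 := by
    intro t ht
    by_cases hT : (π.part (SatPlayer.clause X)).erase (SatPlayer.clause X) = ∅
    · rw [maxSet, if_pos hT] at ht
      rw [Set.mem_singleton_iff] at ht
      subst ht
      norm_num [satU]
    · rw [maxSet, if_neg hT] at ht
      exact hTle3 t ht.1
  have hmaxTex : ∃ t ∈ maxSet (satP F) (SatPlayer.clause X)
      ((π.part (SatPlayer.clause X)).erase (SatPlayer.clause X)),
      satU F (SatPlayer.clause X) t ≤ 3 := by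
    by_cases hT : (π.part (SatPlayer.clause X)).erase (SatPlayer.clause X) = ∅
    · refine ⟨SatPlayer.clause X, ?_, by norm_num [satU]⟩
      rw [maxSet, if_pos hT]; rfl
    · obtain ⟨b, hb, hball⟩ := Finset.exists_max_image _
        (satU F (SatPlayer.clause X)) (Finset.nonempty_of_ne_empty hT)
      refine ⟨b, ?_, hTle3 b hb⟩
      rw [maxSet, if_neg hT]
      exact ⟨hb, fun j hj => hball j hj⟩
  -- the deviation of clause X to π(1)
  refine hNash (SatPlayer.clause X) (π.part SatPlayer.one) (Or.inr ⟨_, rfl⟩) hXne ?_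
  constructor
  · refine Or.inr ⟨?_, fun j hj => clean _ j hj, ?_⟩
    · intro j hj
      rw [herase] at hj
      rw [hueq]
      have h2 : satU F (SatPlayer.clause X) (SatPlayer.clause X) = 2 := rfl
      have := (hS1good j hj).1
      omega
    · intro s hs t ht
      rw [herase] at hs
      have h4 := hmaxS s hs
      have h3 := hmaxT t ht
      exact le_trans h3 (by omega)
  · rintro (⟨j, hj, hu⟩ | ⟨-, -, hcmp⟩)
    · rw [herase] at hj
      rw [hueq] at hu
      have h2 : satU F (SatPlayer.clause X) (SatPlayer.clause X) = 2 := rfl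
      have := (hS1good j hj).1
      omega
    · obtain ⟨s, hs, hs3⟩ := hmaxTex
      obtain ⟨t, ht, ht4⟩ := hmaxSex
      rw [← herase] at ht
      have := hcmp s hs t ht
      simp only [satP] at this
      omega
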